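/- For positive integers m, n, the flat semiring S(w_n) satisfies the identity w_m ≈ w_m′ if and only if n ≠ m, where w_m′ is obtained from w_m by swapping the letters x₁ and x₂. -/

import Mathlib

variable {α : Type*} [DecidableEq α]

/-- The carrier of the flat semiring `S(w)`: nonempty factors of `w` plus `0 = none`. -/
def SW (w : List α) : Type _ := Option {u : List α // u ≠ [] ∧ u <:+: w}

/-- Multiplication on `S(w)`: concatenation when the result is a factor of `w`,
and `0` otherwise. -/
def swMul (w : List α) : SW w → SW w → SW w
  | some u, some v =>
      if h : (u.1 ++ v.1) <:+: w then
        some ⟨u.1 ++ v.1, ⟨by simp [u.2.1], h⟩⟩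
      else none
  | _, _ => none

/-- Evaluate a (nonempty) word in variables `V` in a magma `(S, mul)` under the
assignment `φ`; the empty word is sent to the junk value `z`. -/
def evalWith {S V : Type*} (mul : S → S → S) (z : S) (φ : V → S) : List V → S
  | [] => z
  | h :: t => t.foldl (fun s v => mul s (φ v)) (φ h)

/-- The letter `xᵢ`. -/
def X (i : ℕ) : ℕ ⊕ ℕ := Sum.inl i

/-- The letter `yᵢ`. -/
def Y (i : ℕ) : ℕ ⊕ ℕ := Sum.inr i

/-- The word `wₙ = y₀x₁x₂y₀ (∏_{i=1}^n yᵢx_{i+2}yᵢ) y_{n+1}x_{n+3}x_{n+4}y_{n+1}`. -/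
def wordW (n : ℕ) : List (ℕ ⊕ ℕ) :=
  [Y 0, X 1, X 2, Y 0] ++
  ((List.range n).flatMap fun k => [Y (k+1), X (k+3), Y (k+1)]) ++
  [Y (n+1), X (n+3), X (n+4), Y (n+1)]

/-- The word `wₙ'`, obtained from `wₙ` by swapping `x₁` and `x₂`. -/
def wordW' (n : ℕ) : List (ℕ ⊕ ℕ) :=
  [Y 0, X 2, X 1, Y 0] ++
  ((List.range n).flatMap fun k => [Y (k+1), X (k+3), Y (k+1)]) ++
  [Y (n+1), X (n+3), X (n+4), Y (n+1)]

abbrev L := ℕ ⊕ ℕ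

def midW (n : ℕ) : List L := (List.range n).flatMap fun k => [Y (k+1), X (k+3), Y (k+1)]

lemma wordW_decomp (n : ℕ) :
    wordW n = [Y 0, X 1, X 2, Y 0] ++ midW n ++ [Y (n+1), X (n+3), X (n+4), Y (n+1)] := rfl

lemma midW_length (n : ℕ) : (midW n).length = 3 * n := by
  induction n with
  | zero => simp [midW]
  | succ n ih =>
    simp only [midW, List.range_succ, List.flatMap_append] at *
    simp [ih]; omega

lemma midW_get (n j : ℕ) (c : L) : (midW n)[j]? = some c ↔
    ∃ k, k < n ∧ (j = 3*k ∧ c = Y (k+1) ∨ j = 3*k+1 ∧ c = X (k+3) ∨ j = 3*k+2 ∧ c = Y (k+1)) := by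
  induction n with
  | zero => simp [midW]
  | succ n ih =>
    have hsp : midW (n+1) = midW n ++ [Y (n+1), X (n+3), Y (n+1)] := by
      simp [midW, List.range_succ]
    rw [hsp]
    rcases lt_or_ge j (3*n) with hj | hj
    · rw [List.getElem?_append_left (by rw [midW_length]; omega), ih]
      constructor
      · rintro ⟨k, hk, h⟩; exact ⟨k, by omega, h⟩
      · rintro ⟨k, hk, h⟩
        refine ⟨k, by omega, ?_⟩
        rcases h with ⟨h1, h2⟩ | ⟨h1, h2⟩ | ⟨h1, h2⟩
        · exact Or.inl ⟨h1, h2⟩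
        · exact Or.inr (Or.inl ⟨h1, h2⟩)
        · exact Or.inr (Or.inr ⟨h1, h2⟩)
    · rw [List.getElem?_append_right (by rw [midW_length]; omega), midW_length]
      have h3 : j - 3*n = 0 ∨ j - 3*n = 1 ∨ j - 3*n = 2 ∨ 3 ≤ j - 3*n := by omega
      rcases h3 with h | h | h | h
      · rw [h]
        simp only [List.getElem?_cons_zero, Option.some.injEq]
        constructor
        · rintro rfl
          refine ⟨n, by omega, Or.inl ⟨by omega, rfl⟩⟩
        · rintro ⟨k, hk, (⟨h1, rfl⟩ | ⟨h1, rfl⟩ | ⟨h1, rfl⟩)⟩ <;> simp [X, Y] <;> omega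
      · rw [h]
        simp only [List.getElem?_cons_succ, List.getElem?_cons_zero, Option.some.injEq]
        constructor
        · rintro rfl
          refine ⟨n, by omega, Or.inr (Or.inl ⟨?_, rfl⟩)⟩
          clear ih hsp
          omega
        · rintro ⟨k, hk, (⟨h1, rfl⟩ | ⟨h1, rfl⟩ | ⟨h1, rfl⟩)⟩ <;> simp [X, Y] <;> omega
      · rw [h]
        simp only [List.getElem?_cons_succ, List.getElem?_cons_zero, Option.some.injEq]
        constructor
        · rintro rfl
          refine ⟨n, by omega, Or.inr (Or.inr ⟨?_, rfl⟩)⟩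
          clear ih hsp
          omega
        · rintro ⟨k, hk, (⟨h1, rfl⟩ | ⟨h1, rfl⟩ | ⟨h1, rfl⟩)⟩ <;> simp [X, Y] <;> omega
      · rw [List.getElem?_eq_none (by simp; omega)]
        simp only [reduceCtorEq, false_iff]
        rintro ⟨k, hk, (⟨h1, _⟩ | ⟨h1, _⟩ | ⟨h1, _⟩)⟩ <;> omega

lemma wordW_length (n : ℕ) : (wordW n).length = 3*n + 8 := by
  rw [wordW_decomp]
  simp [midW_length]
  try omega

lemma wordW_get (n j : ℕ) (c : L) : (wordW n)[j]? = some c ↔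
    (j = 0 ∧ c = Y 0) ∨ (j = 1 ∧ c = X 1) ∨ (j = 2 ∧ c = X 2) ∨ (j = 3 ∧ c = Y 0) ∨
    (∃ k, k < n ∧ (j = 3*k+4 ∧ c = Y (k+1) ∨ j = 3*k+5 ∧ c = X (k+3) ∨ j = 3*k+6 ∧ c = Y (k+1))) ∨
    (j = 3*n+4 ∧ c = Y (n+1)) ∨ (j = 3*n+5 ∧ c = X (n+3)) ∨
    (j = 3*n+6 ∧ c = X (n+4)) ∨ (j = 3*n+7 ∧ c = Y (n+1)) := by
  have hw : wordW n = [Y 0, X 1, X 2, Y 0] ++ (midW n ++ [Y (n+1), X (n+3), X (n+4), Y (n+1)]) := by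
    rw [wordW_decomp, List.append_assoc]
  rw [hw]
  have h4 : j = 0 ∨ j = 1 ∨ j = 2 ∨ j = 3 ∨ 4 ≤ j := by omega
  rcases h4 with rfl | rfl | rfl | rfl | h4
  · rw [show (([Y 0, X 1, X 2, Y 0] : List L) ++ (midW n ++ [Y (n+1), X (n+3), X (n+4), Y (n+1)]))[0]? = some (Y 0) from by simp]
    simp only [Option.some.injEq]
    constructor
    · rintro rfl; exact Or.inl ⟨trivial, rfl⟩
    · rintro (⟨_,rfl⟩|⟨h,_⟩|⟨h,_⟩|⟨h,_⟩|⟨k,hk,(⟨h,_⟩|⟨h,_⟩|⟨h,_⟩)⟩|⟨h,_⟩|⟨h,_⟩|⟨h,_⟩|⟨h,_⟩) <;>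
        first | rfl | omega | exact h.elim | (simp [X, Y]; omega)
  · rw [show (([Y 0, X 1, X 2, Y 0] : List L) ++ (midW n ++ [Y (n+1), X (n+3), X (n+4), Y (n+1)]))[1]? = some (X 1) from by simp]
    simp only [Option.some.injEq]
    constructor
    · rintro rfl; exact Or.inr (Or.inl ⟨trivial, rfl⟩)
    · rintro (⟨h,_⟩|⟨_,rfl⟩|⟨h,_⟩|⟨h,_⟩|⟨k,hk,(⟨h,_⟩|⟨h,_⟩|⟨h,_⟩)⟩|⟨h,_⟩|⟨h,_⟩|⟨h,_⟩|⟨h,_⟩) <;>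
        first | rfl | omega | exact h.elim | (simp [X, Y]; omega)
  · rw [show (([Y 0, X 1, X 2, Y 0] : List L) ++ (midW n ++ [Y (n+1), X (n+3), X (n+4), Y (n+1)]))[2]? = some (X 2) from by simp]
    simp only [Option.some.injEq]
    constructor
    · rintro rfl; exact Or.inr (Or.inr (Or.inl ⟨trivial, rfl⟩))
    · rintro (⟨h,_⟩|⟨h,_⟩|⟨_,rfl⟩|⟨h,_⟩|⟨k,hk,(⟨h,_⟩|⟨h,_⟩|⟨h,_⟩)⟩|⟨h,_⟩|⟨h,_⟩|⟨h,_⟩|⟨h,_⟩) <;>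
        first | rfl | omega | exact h.elim | (simp [X, Y]; omega)
  · rw [show (([Y 0, X 1, X 2, Y 0] : List L) ++ (midW n ++ [Y (n+1), X (n+3), X (n+4), Y (n+1)]))[3]? = some (Y 0) from by simp]
    simp only [Option.some.injEq]
    constructor
    · rintro rfl; exact Or.inr (Or.inr (Or.inr (Or.inl ⟨trivial, rfl⟩)))
    · rintro (⟨h,_⟩|⟨h,_⟩|⟨h,_⟩|⟨_,rfl⟩|⟨k,hk,(⟨h,_⟩|⟨h,_⟩|⟨h,_⟩)⟩|⟨h,_⟩|⟨h,_⟩|⟨h,_⟩|⟨h,_⟩) <;>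
        first | rfl | omega | exact h.elim | (simp [X, Y]; omega)
  · rw [List.getElem?_append_right (by simp; omega)]
    simp only [List.length_cons, List.length_nil]
    rcases lt_or_ge (j - 4) (3*n) with hj | hj
    · rw [List.getElem?_append_left (by rw [midW_length]; omega), midW_get]
      constructor
      · rintro ⟨k, hk, (⟨h1,rfl⟩|⟨h1,rfl⟩|⟨h1,rfl⟩)⟩
        · exact Or.inr (Or.inr (Or.inr (Or.inr (Or.inl ⟨k, hk, Or.inl ⟨by omega, rfl⟩⟩))))
        · exact Or.inr (Or.inr (Or.inr (Or.inr (Or.inl ⟨k, hk, Or.inr (Or.inl ⟨by omega, rfl⟩)⟩))))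
        · exact Or.inr (Or.inr (Or.inr (Or.inr (Or.inl ⟨k, hk, Or.inr (Or.inr ⟨by omega, rfl⟩)⟩))))
      · rintro (⟨h,_⟩|⟨h,_⟩|⟨h,_⟩|⟨h,_⟩|⟨k,hk,(⟨h1,rfl⟩|⟨h1,rfl⟩|⟨h1,rfl⟩)⟩|⟨h,_⟩|⟨h,_⟩|⟨h,_⟩|⟨h,_⟩) <;>
          first
          | omega
          | (refine ⟨k, hk, ?_⟩
             first
             | exact Or.inl ⟨by omega, rfl⟩
             | exact Or.inr (Or.inl ⟨by omega, rfl⟩)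
             | exact Or.inr (Or.inr ⟨by omega, rfl⟩))
    · rw [List.getElem?_append_right (by rw [midW_length]; omega), midW_length]
      have h3 : j - 4 - 3*n = 0 ∨ j - 4 - 3*n = 1 ∨ j - 4 - 3*n = 2 ∨ j - 4 - 3*n = 3 ∨
          4 ≤ j - 4 - 3*n := by omega
      rcases h3 with h | h | h | h | h
      · rw [h]
        simp only [List.getElem?_cons_zero, Option.some.injEq]
        constructor
        · rintro rfl
          exact Or.inr (Or.inr (Or.inr (Or.inr (Or.inr (Or.inl ⟨by omega, rfl⟩)))))
        · rintro (⟨h1,_⟩|⟨h1,_⟩|⟨h1,_⟩|⟨h1,_⟩|⟨k,hk,(⟨h1,rfl⟩|⟨h1,rfl⟩|⟨h1,rfl⟩)⟩|⟨h1,rfl⟩|⟨h1,h2⟩|⟨h1,h2⟩|⟨h1,rfl⟩) <;>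
            first | rfl | omega | (simp [X, Y]; omega)
      · rw [h]
        simp only [List.getElem?_cons_succ, List.getElem?_cons_zero, Option.some.injEq]
        constructor
        · rintro rfl
          exact Or.inr (Or.inr (Or.inr (Or.inr (Or.inr (Or.inr (Or.inl ⟨by omega, rfl⟩))))))
        · rintro (⟨h1,_⟩|⟨h1,_⟩|⟨h1,_⟩|⟨h1,_⟩|⟨k,hk,(⟨h1,rfl⟩|⟨h1,rfl⟩|⟨h1,rfl⟩)⟩|⟨h1,rfl⟩|⟨h1,rfl⟩|⟨h1,rfl⟩|⟨h1,rfl⟩) <;>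
            first | rfl | omega | (simp [X, Y]; omega)
      · rw [h]
        simp only [List.getElem?_cons_succ, List.getElem?_cons_zero, Option.some.injEq]
        constructor
        · rintro rfl
          exact Or.inr (Or.inr (Or.inr (Or.inr (Or.inr (Or.inr (Or.inr (Or.inl ⟨by omega, rfl⟩)))))))
        · rintro (⟨h1,_⟩|⟨h1,_⟩|⟨h1,_⟩|⟨h1,_⟩|⟨k,hk,(⟨h1,rfl⟩|⟨h1,rfl⟩|⟨h1,rfl⟩)⟩|⟨h1,rfl⟩|⟨h1,rfl⟩|⟨h1,rfl⟩|⟨h1,rfl⟩) <;>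
            first | rfl | omega | (simp [X, Y]; omega)
      · rw [h]
        simp only [List.getElem?_cons_succ, List.getElem?_cons_zero, Option.some.injEq]
        constructor
        · rintro rfl
          exact Or.inr (Or.inr (Or.inr (Or.inr (Or.inr (Or.inr (Or.inr (Or.inr ⟨by omega, rfl⟩)))))))
        · rintro (⟨h1,_⟩|⟨h1,_⟩|⟨h1,_⟩|⟨h1,_⟩|⟨k,hk,(⟨h1,rfl⟩|⟨h1,rfl⟩|⟨h1,rfl⟩)⟩|⟨h1,rfl⟩|⟨h1,rfl⟩|⟨h1,rfl⟩|⟨h1,rfl⟩) <;>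
            first | rfl | omega | (simp [X, Y]; omega)
      · rw [List.getElem?_eq_none (by simp; omega)]
        simp only [reduceCtorEq, false_iff]
        rintro (⟨h1,_⟩|⟨h1,_⟩|⟨h1,_⟩|⟨h1,_⟩|⟨k,hk,(⟨h1,_⟩|⟨h1,_⟩|⟨h1,_⟩)⟩|⟨h1,_⟩|⟨h1,_⟩|⟨h1,_⟩|⟨h1,_⟩) <;> omega

set_option maxHeartbeats 1000000 in
lemma twoOcc {n i j : ℕ} {c : L} (hij : i < j) (hi : (wordW n)[i]? = some c)
    (hj : (wordW n)[j]? = some c) :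
    (i = 0 ∧ j = 3) ∨ j = i + 2 ∨ (i = 3*n+4 ∧ j = 3*n+7) := by
  rw [wordW_get] at hi hj
  rcases hi with ⟨rfl,rfl⟩|⟨rfl,rfl⟩|⟨rfl,rfl⟩|⟨rfl,rfl⟩|⟨k,hk,(⟨rfl,rfl⟩|⟨rfl,rfl⟩|⟨rfl,rfl⟩)⟩|⟨rfl,rfl⟩|⟨rfl,rfl⟩|⟨rfl,rfl⟩|⟨rfl,rfl⟩ <;>
    rcases hj with ⟨h1,h2⟩|⟨h1,h2⟩|⟨h1,h2⟩|⟨h1,h2⟩|⟨k',hk',(⟨h1,h2⟩|⟨h1,h2⟩|⟨h1,h2⟩)⟩|⟨h1,h2⟩|⟨h1,h2⟩|⟨h1,h2⟩|⟨h1,h2⟩ <;>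
    simp only [X, Y, Sum.inl.injEq, Sum.inr.injEq, reduceCtorEq] at h2 <;> omega

section evalLemmas

lemma swMul_none_left (w : List α) (x : SW w) : swMul w none x = none := by
  cases x <;> rfl

lemma swMul_some_none (w : List α) (u : {u : List α // u ≠ [] ∧ u <:+: w}) :
    swMul w (some u) none = none := rfl

lemma swMul_some_some (w : List α) (u v : {u : List α // u ≠ [] ∧ u <:+: w}) :
    swMul w (some u) (some v) =
      if h : (u.1 ++ v.1) <:+: w then some ⟨u.1 ++ v.1, ⟨by simp [u.2.1], h⟩⟩ else none := rfl

lemma foldl_none {V : Type*} (w : List α) (φ : V → SW w) (t : List V) :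
    t.foldl (fun s v => swMul w s (φ v)) (none : SW w) = none := by
  induction t with
  | nil => rfl
  | cons a t ih => erw [List.foldl_cons, swMul_none_left]; exact ih

lemma foldl_infix {V : Type*} (w : List α) (φ : V → SW w) (d : List α) :
    ∀ (t : List V) (u : {u : List α // u ≠ [] ∧ u <:+: w}),
      t.foldl (fun s v => swMul w s (φ v)) (some u) ≠ none →
      (u.1 ++ t.flatMap fun a => (φ a).elim d Subtype.val) <:+: w := by
  intro t
  induction t with
  | nil => intro u _; simpa using u.2.2
  | cons a t ih =>
    intro u hne
    erw [List.foldl_cons] at hne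
    cases hφ : φ a with
    | none =>
      rw [hφ, swMul_some_none] at hne
      exact absurd (foldl_none w φ t) hne
    | some v =>
      rw [hφ, swMul_some_some] at hne
      by_cases h2 : (u.1 ++ v.1) <:+: w
      · rw [dif_pos h2] at hne
        have h3 := ih ⟨u.1 ++ v.1, ⟨by simp [u.2.1], h2⟩⟩ hne
        rw [List.flatMap_cons]
        have hv : (φ a).elim d Subtype.val = v.1 := by rw [hφ]; rfl
        rw [hv]
        simpa [List.append_assoc] using h3
      · rw [dif_neg h2] at hne
        exact absurd (foldl_none w φ t) hne

lemma eval_subst {w : List L} (φ : L → SW w) (h : L) (t : List L)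
    (hne : evalWith (swMul w) none φ (h :: t) ≠ none) :
    ∃ σ : L → List L, (∀ x, σ x ≠ []) ∧ ((h :: t).flatMap σ) <:+: w := by
  have he : evalWith (swMul w) none φ (h :: t) =
      t.foldl (fun s v => swMul w s (φ v)) (φ h) := rfl
  rw [he] at hne
  cases hφ : φ h with
  | none => rw [hφ] at hne; exact absurd (foldl_none w φ t) hne
  | some u =>
    rw [hφ] at hne
    refine ⟨fun a => (φ a).elim [Y 0] Subtype.val, ?_, ?_⟩
    · intro x
      cases hx : φ x with
      | none => simp [hx]
      | some v => simpa [hx] using v.2.1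
    · have h3 := foldl_infix w φ [Y 0] t u hne
      rw [List.flatMap_cons]
      have hu : (φ h).elim ([Y 0] : List L) Subtype.val = u.1 := by rw [hφ]; rfl
      rw [hu]
      exact h3

def phiId (w : List L) : L → SW w := fun a =>
  if h : [a] <:+: w then some ⟨[a], by simp, h⟩ else none

lemma foldl_phiId (w : List L) :
    ∀ (t : List L) (u : {u : List L // u ≠ [] ∧ u <:+: w}),
      t.foldl (fun s v => swMul w s (phiId w v)) (some u) =
        if h : (u.1 ++ t) <:+: w then some ⟨u.1 ++ t, ⟨by simp [u.2.1], h⟩⟩ else none := by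
  intro t
  induction t with
  | nil =>
    intro u
    erw [List.foldl_nil, dif_pos (by simpa using u.2.2)]
    simp
    exact rfl
  | cons a t ih =>
    intro u
    erw [List.foldl_cons]
    by_cases ha : [a] <:+: w
    · have hφ : phiId w a = some ⟨[a], by simp, ha⟩ := dif_pos ha
      rw [hφ, swMul_some_some]
      by_cases h2 : (u.1 ++ [a]) <:+: w
      · rw [dif_pos h2, ih ⟨u.1 ++ [a], ⟨by simp [u.2.1], h2⟩⟩]
        by_cases h3 : (u.1 ++ a :: t) <:+: w
        · rw [dif_pos (by simpa [List.append_assoc] using h3), dif_pos h3]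
          simp
          exact rfl
        · rw [dif_neg (by simpa [List.append_assoc] using h3), dif_neg h3]
      · rw [dif_neg h2, foldl_none]
        have h3 : ¬ (u.1 ++ a :: t) <:+: w := by
          intro h3
          exact h2 (((List.prefix_append (u.1 ++ [a]) t).isInfix).trans
            (by simpa [List.append_assoc] using h3))
        rw [dif_neg h3]
    · have hφ : phiId w a = none := dif_neg ha
      rw [hφ, swMul_some_none, foldl_none]
      have h3 : ¬ (u.1 ++ a :: t) <:+: w := by
        intro h3
        refine ha (List.IsInfix.trans ?_ h3)
        exact ⟨u.1, t, by simp⟩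
      rw [dif_neg h3]

lemma eval_phiId (w : List L) (h : L) (t : List L) :
    evalWith (swMul w) none (phiId w) (h :: t) =
      if hh : (h :: t) <:+: w then some ⟨h :: t, ⟨by simp, hh⟩⟩ else none := by
  have he : evalWith (swMul w) none (phiId w) (h :: t) =
      t.foldl (fun s v => swMul w s (phiId w v)) (phiId w h) := rfl
  rw [he]
  by_cases h1 : [h] <:+: w
  · have hφ : phiId w h = some ⟨[h], by simp, h1⟩ := dif_pos h1
    rw [hφ, foldl_phiId]
    by_cases h3 : (h :: t) <:+: w
    · rw [dif_pos (by simpa using h3), dif_pos h3]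
      exact rfl
    · rw [dif_neg (by simpa using h3), dif_neg h3]
  · have hφ : phiId w h = none := dif_neg h1
    rw [hφ, foldl_none]
    have h3 : ¬ (h :: t) <:+: w := by
      intro h3
      exact h1 (List.IsInfix.trans ⟨[], t, rfl⟩ h3)
    rw [dif_neg h3]

end evalLemmas

section mainLemma

def genW (m : ℕ) (a b : L) : List L :=
  [Y 0, a, b, Y 0] ++ midW m ++ [Y (m+1), X (m+3), X (m+4), Y (m+1)]

lemma genW_w (m : ℕ) : genW m (X 1) (X 2) = wordW m := rfl
lemma genW_w' (m : ℕ) : genW m (X 2) (X 1) = wordW' m := rfl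

lemma get_mid (w pre suf : List L) (c : L) (h : w = pre ++ c :: suf) :
    w[pre.length]? = some c := by
  subst h
  rw [List.getElem?_append_right le_rfl]
  simp

lemma flatMap_length_ge (σ : L → List L) (hσ : ∀ x, σ x ≠ []) (l : List L) :
    l.length ≤ (l.flatMap σ).length := by
  induction l with
  | nil => simp
  | cons h t ih =>
    have h1 : 0 < (σ h).length := List.length_pos_iff.mpr (hσ h)
    rw [List.flatMap_cons, List.length_append, List.length_cons]
    omega

lemma flatMap_mem_split {l : List ℕ} {a : ℕ} (h : a ∈ l) (g : ℕ → List L) :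
    ∃ p q, l.flatMap g = p ++ g a ++ q := by
  obtain ⟨s, t, rfl⟩ := List.append_of_mem h
  exact ⟨s.flatMap g, t.flatMap g, by simp⟩

lemma midW_flat_len (σ : L → List L) (hσ : ∀ x, σ x ≠ []) (m : ℕ)
    (h : ∀ k, k < m → (σ (Y (k+1))).length + (σ (X (k+3))).length = 2) :
    ((midW m).flatMap σ).length = 3 * m := by
  induction m with
  | zero => simp [midW]
  | succ m ih =>
    have hsp : midW (m+1) = midW m ++ [Y (m+1), X (m+3), Y (m+1)] := by
      simp [midW, List.range_succ]
    have h1 : 0 < (σ (Y (m+1))).length := List.length_pos_iff.mpr (hσ _)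
    have h2 : 0 < (σ (X (m+3))).length := List.length_pos_iff.mpr (hσ _)
    have h3 := h m (by omega)
    rw [hsp, List.flatMap_append, List.length_append, ih (fun k hk => h k (by omega))]
    simp [List.flatMap_cons]
    omega

lemma main_lemma (m n : ℕ) (a b : L) (σ : L → List L) (hσ : ∀ x, σ x ≠ [])
    (h : (genW m a b).flatMap σ <:+: wordW n) : m = n := by
  obtain ⟨P, S, hw⟩ := h
  obtain ⟨c, cs, hc⟩ := List.exists_cons_of_ne_nil (hσ (Y 0))
  have hM : (genW m a b).flatMap σ =
      σ (Y 0) ++ σ a ++ σ b ++ σ (Y 0) ++ (midW m).flatMap σ ++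
      σ (Y (m+1)) ++ σ (X (m+3)) ++ σ (X (m+4)) ++ σ (Y (m+1)) := by
    simp [genW, List.flatMap_append]
  have hla : 0 < (σ a).length := List.length_pos_iff.mpr (hσ a)
  have hlb : 0 < (σ b).length := List.length_pos_iff.mpr (hσ b)
  have hl3 : 0 < (σ (X (m+3))).length := List.length_pos_iff.mpr (hσ _)
  have hl4 : 0 < (σ (X (m+4))).length := List.length_pos_iff.mpr (hσ _)
  have hlen : P.length + ((genW m a b).flatMap σ).length + S.length = 3*n+8 := by
    have h' := congrArg List.length hw
    rw [wordW_length] at h'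
    simp only [List.length_append] at h'
    omega
  have hMge : 3*m+8 ≤ ((genW m a b).flatMap σ).length := by
    have h1 := flatMap_length_ge σ hσ (genW m a b)
    have hg : (genW m a b).length = 3*m+8 := by
      simp [genW, midW_length]
      try omega
    omega
  -- first block
  have hsh1 : wordW n = P ++ c :: (cs ++ (σ a ++ (σ b ++ ((c :: cs) ++ ((midW m).flatMap σ ++
      (σ (Y (m+1)) ++ (σ (X (m+3)) ++ (σ (X (m+4)) ++ (σ (Y (m+1)) ++ S))))))))) := by
    rw [← hw, hM, hc]; simp [List.append_assoc]
  have hsh2 : wordW n = (P ++ c :: (cs ++ σ a ++ σ b)) ++ c :: (cs ++ ((midW m).flatMap σ ++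
      (σ (Y (m+1)) ++ (σ (X (m+3)) ++ (σ (X (m+4)) ++ (σ (Y (m+1)) ++ S)))))) := by
    rw [← hw, hM, hc]; simp [List.append_assoc]
  have occ1 := get_mid _ _ _ _ hsh1
  have occ2 := get_mid _ _ _ _ hsh2
  have hi2 : (P ++ c :: (cs ++ σ a ++ σ b)).length
      = P.length + 1 + cs.length + (σ a).length + (σ b).length := by simp; omega
  rw [hi2] at occ2
  have h2 := twoOcc (by omega) occ1 occ2
  have hfirst : P.length = 0 ∧ cs.length = 0 ∧ (σ a).length = 1 ∧ (σ b).length = 1 := by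
    rcases h2 with ⟨e1, e2⟩ | e | ⟨e1, e2⟩ <;> omega
  have hcs : cs = [] := List.length_eq_zero_iff.mp hfirst.2.1
  subst hcs
  -- last block
  obtain ⟨zs, d, hd⟩ := (List.eq_nil_or_concat (σ (Y (m+1)))).resolve_left (hσ _)
  have hsh3 : wordW n = (P ++ σ (Y 0) ++ σ a ++ σ b ++ σ (Y 0) ++ (midW m).flatMap σ ++ zs)
      ++ d :: (σ (X (m+3)) ++ (σ (X (m+4)) ++ (zs ++ (d :: S)))) := by
    rw [← hw, hM, hd]; simp [List.append_assoc]
  have hsh4 : wordW n = (P ++ σ (Y 0) ++ σ a ++ σ b ++ σ (Y 0) ++ (midW m).flatMap σ ++ zs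
      ++ [d] ++ σ (X (m+3)) ++ σ (X (m+4)) ++ zs) ++ d :: S := by
    rw [← hw, hM, hd]; simp [List.append_assoc]
  have occ3 := get_mid _ _ _ _ hsh3
  have occ4 := get_mid _ _ _ _ hsh4
  have hi3 : (P ++ σ (Y 0) ++ σ a ++ σ b ++ σ (Y 0) ++ (midW m).flatMap σ ++ zs).length
      = P.length + 4 + ((midW m).flatMap σ).length + zs.length := by simp [hc]; omega
  have hi4 : (P ++ σ (Y 0) ++ σ a ++ σ b ++ σ (Y 0) ++ (midW m).flatMap σ ++ zs
      ++ [d] ++ σ (X (m+3)) ++ σ (X (m+4)) ++ zs).length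
      = P.length + 4 + ((midW m).flatMap σ).length + zs.length + 1
        + (σ (X (m+3))).length + (σ (X (m+4))).length + zs.length := by simp [hc]; omega
  rw [hi3] at occ3
  rw [hi4] at occ4
  have h3 := twoOcc (by omega) occ3 occ4
  have hMlen : ((genW m a b).flatMap σ).length = 4 + ((midW m).flatMap σ).length
      + 2*zs.length + 2 + (σ (X (m+3))).length + (σ (X (m+4))).length := by
    have h' := hM
    rw [hc, hd] at h'
    have h'' := congrArg List.length h'
    simp only [List.length_append, List.length_concat, List.length_cons, List.length_nil] at h''
    omega
  have hlast : zs.length = 0 ∧ (σ (X (m+3))).length = 1 ∧ (σ (X (m+4))).length = 1 ∧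
      ((midW m).flatMap σ).length = 3*n := by
    rcases h3 with ⟨e1, e2⟩ | e | ⟨e1, e2⟩ <;> omega
  -- interior blocks
  have hblock : ∀ k, k < m → (σ (Y (k+1))).length + (σ (X (k+3))).length = 2 := by
    intro k hk
    obtain ⟨pre, post, hsplit⟩ := flatMap_mem_split (List.mem_range.mpr hk)
        (fun k => [Y (k+1), X (k+3), Y (k+1)])
    have hmid : (midW m).flatMap σ = pre.flatMap σ ++
        (σ (Y (k+1)) ++ σ (X (k+3)) ++ σ (Y (k+1))) ++ post.flatMap σ := by
      rw [midW, hsplit]; simp [List.flatMap_append]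
    obtain ⟨e, es, he⟩ := List.exists_cons_of_ne_nil (hσ (Y (k+1)))
    have hYk : (σ (Y (k+1))).length = es.length + 1 := by rw [he]; simp
    have hsh5 : wordW n = (P ++ σ (Y 0) ++ σ a ++ σ b ++ σ (Y 0) ++ pre.flatMap σ) ++
        e :: (es ++ (σ (X (k+3)) ++ ((e :: es) ++ (post.flatMap σ ++ (σ (Y (m+1)) ++
          (σ (X (m+3)) ++ (σ (X (m+4)) ++ (σ (Y (m+1)) ++ S)))))))) := by
      rw [← hw, hM, hmid, he]; simp [List.append_assoc]
    have hsh6 : wordW n = (P ++ σ (Y 0) ++ σ a ++ σ b ++ σ (Y 0) ++ pre.flatMap σ ++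
        (e :: es) ++ σ (X (k+3))) ++ e :: (es ++ (post.flatMap σ ++ (σ (Y (m+1)) ++
          (σ (X (m+3)) ++ (σ (X (m+4)) ++ (σ (Y (m+1)) ++ S)))))) := by
      rw [← hw, hM, hmid, he]; simp [List.append_assoc]
    have occ5 := get_mid _ _ _ _ hsh5
    have occ6 := get_mid _ _ _ _ hsh6
    have hi5 : (P ++ σ (Y 0) ++ σ a ++ σ b ++ σ (Y 0) ++ pre.flatMap σ).length
        = P.length + 4 + (pre.flatMap σ).length := by simp [hc]; omega
    have hi6 : (P ++ σ (Y 0) ++ σ a ++ σ b ++ σ (Y 0) ++ pre.flatMap σ ++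
        (e :: es) ++ σ (X (k+3))).length
        = P.length + 4 + (pre.flatMap σ).length + 1 + es.length + (σ (X (k+3))).length := by
      simp [hc]; omega
    rw [hi5] at occ5
    rw [hi6] at occ6
    have hlxk : 0 < (σ (X (k+3))).length := List.length_pos_iff.mpr (hσ _)
    have h6' := hsh6
    rw [hc, hd] at h6'
    have htot := congrArg List.length h6'
    rw [wordW_length] at htot
    simp only [List.length_append, List.length_concat, List.length_cons, List.length_nil] at htot
    have h5 := twoOcc (by omega) occ5 occ6
    rcases h5 with ⟨e1, e2⟩ | e' | ⟨e1, e2⟩ <;> omega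
  have hqm := midW_flat_len σ hσ m hblock
  omega

end mainLemma

lemma wordW'_decomp (n : ℕ) :
    wordW' n = [Y 0, X 2, X 1, Y 0] ++ midW n ++ [Y (n+1), X (n+3), X (n+4), Y (n+1)] := rfl

lemma wordW'_length (n : ℕ) : (wordW' n).length = 3*n + 8 := by
  rw [wordW'_decomp]
  simp [midW_length]
  try omega

/-- The flat semiring `S(wₙ)` satisfies the identity `wₘ ≈ wₘ'` iff `n ≠ m`. -/
theorem stmt13 (m n : ℕ) (hm : 1 ≤ m) (hn : 1 ≤ n) :
    (∀ φ : (ℕ ⊕ ℕ) → SW (wordW n),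
        evalWith (swMul (wordW n)) none φ (wordW m) =
          evalWith (swMul (wordW n)) none φ (wordW' m)) ↔ n ≠ m := by
  constructor
  · intro H hnm
    subst hnm
    have H1 := H (phiId (wordW n))
    obtain ⟨t, ht⟩ : ∃ t, wordW n = Y 0 :: t := ⟨_, rfl⟩
    obtain ⟨t', ht'⟩ : ∃ t', wordW' n = Y 0 :: t' := ⟨_, rfl⟩
    rw [ht, ht', eval_phiId, eval_phiId] at H1
    rw [dif_pos (List.infix_refl _)] at H1
    have hneg : ¬ ((Y 0 :: t') <:+: (Y 0 :: t)) := by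
      rw [← ht, ← ht']
      intro hinf
      have heq : wordW' n = wordW n :=
        hinf.sublist.eq_of_length (by rw [wordW_length, wordW'_length])
      have hA : (wordW' n)[1]? = some (X 2) := by rw [wordW'_decomp]; rfl
      have hB : (wordW n)[1]? = some (X 1) := by rw [wordW_decomp]; rfl
      rw [heq, hB] at hA
      simp [X] at hA
    rw [dif_neg hneg] at H1
    simp at H1
  · intro hne φ
    obtain ⟨t, ht⟩ : ∃ t, wordW m = Y 0 :: t := ⟨_, rfl⟩
    obtain ⟨t', ht'⟩ : ∃ t', wordW' m = Y 0 :: t' := ⟨_, rfl⟩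
    have h1 : evalWith (swMul (wordW n)) none φ (wordW m) = none := by
      by_contra hne'
      rw [ht] at hne'
      obtain ⟨σ, hσ, hinf⟩ := eval_subst φ _ _ hne'
      rw [← ht] at hinf
      exact hne (main_lemma m n (X 1) (X 2) σ hσ (by rw [genW_w]; exact hinf)).symm
    have h2 : evalWith (swMul (wordW n)) none φ (wordW' m) = none := by
      by_contra hne'
      rw [ht'] at hne'
      obtain ⟨σ, hσ, hinf⟩ := eval_subst φ _ _ hne'
      rw [← ht'] at hinf
      exact hne (main_lemma m n (X 2) (X 1) σ hσ (by rw [genW_w']; exact hinf)).symm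
    rw [h1, h2]
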